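/- arXiv:2407.18144 — 2 statements merged into one kernel-verified Lean document; each statement's English description precedes it below -/
import Mathlib

section
/- Let A_1, …, A_n be a finite set of events in a probability space, and suppose that for each i ∈ [n] there exists a set B(i) ⊆ [n] such that A_i is mutually independent from the family {A_j : j ∈ [n] ∖ B(i)}. Suppose also that for each i ∈ [n] we have P[A_i] < 1/2 and Σ_{j ∈ B(i)} P[A_j] ≤ 1/4. Then P[A_1ᶜ ∩ ⋯ ∩ A_nᶜ] > 0. -/
open MeasureTheory
open scoped ENNReal

/-- Lemma 3.3 (a version of the Lovász Local Lemma).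
Mutual independence of `A i` from `{A j : j ∉ B i}` is expressed by:
for all disjoint families `S1, S2` of indices outside `B i`,
`μ (A i ∩ ⋂_{j ∈ S1} A j ∩ ⋂_{j ∈ S2} (A j)ᶜ) = μ (A i) * μ (⋂_{j ∈ S1} A j ∩ ⋂_{j ∈ S2} (A j)ᶜ)`. -/
theorem statement7 {Ω : Type*} [MeasurableSpace Ω] (μ : Measure Ω)
    [IsProbabilityMeasure μ] (n : ℕ) (A : Fin n → Set Ω)
    (hmeas : ∀ i, MeasurableSet (A i)) (B : Fin n → Finset (Fin n))
    (hindep : ∀ i : Fin n, ∀ S1 S2 : Finset (Fin n),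
      (∀ j ∈ S1, j ∉ B i) → (∀ j ∈ S2, j ∉ B i) → Disjoint S1 S2 →
      μ (A i ∩ ((⋂ j ∈ S1, A j) ∩ (⋂ j ∈ S2, (A j)ᶜ))) =
        μ (A i) * μ ((⋂ j ∈ S1, A j) ∩ (⋂ j ∈ S2, (A j)ᶜ)))
    (hhalf : ∀ i, μ (A i) < 1 / 2)
    (hsum : ∀ i, (∑ j ∈ B i, μ (A j)) ≤ 1 / 4) :
    0 < μ (⋂ i, (A i)ᶜ) := by
  classical
  set N : Finset (Fin n) → Set Ω := fun T => ⋂ j ∈ T, (A j)ᶜ with hN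
  have hNanti : ∀ {T1 T2 : Finset (Fin n)}, T1 ⊆ T2 → N T2 ⊆ N T1 := by
    intro T1 T2 h
    exact Set.biInter_subset_biInter_left (fun j hj => h hj)
  have hfin : ∀ s : Set Ω, μ s ≠ ⊤ := fun s => (measure_lt_top μ s).ne
  have htwofour : (2:ℝ≥0∞) * (1/4) = 1/2 := by
    rw [ENNReal.eq_div_iff two_ne_zero ENNReal.ofNat_ne_top, ← mul_assoc,
      show (2:ℝ≥0∞)*2 = 4 by norm_num, one_div,
      ENNReal.mul_inv_cancel (by norm_num) (by norm_num)]
  have hhalfmul : ∀ x : ℝ≥0∞, (1/2 : ℝ≥0∞) * x = x / 2 := by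
    intro x
    rw [one_div, ENNReal.div_eq_inv_mul]
  -- key estimate: μ (A i ∩ N T) ≤ 2 μ(A i) μ(N T)
  have key : ∀ T : Finset (Fin n), ∀ i, μ (A i ∩ N T) ≤ 2 * μ (A i) * μ (N T) := by
    intro T
    induction T using Finset.strongInduction with
    | _ T ih =>
      intro i
      by_cases hT1 : (T ∩ B i).Nonempty
      · -- hard case
        set T2 : Finset (Fin n) := T \ B i with hT2def
        have hT2ss : T2 ⊂ T := by
          refine Finset.ssubset_iff_of_subset (Finset.sdiff_subset) |>.mpr ?_
          obtain ⟨j, hj⟩ := hT1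
          exact ⟨j, (Finset.mem_inter.mp hj).1, by
            simp [hT2def, (Finset.mem_inter.mp hj).2]⟩
        have hindep2 : μ (A i ∩ N T2) = μ (A i) * μ (N T2) := by
          have := hindep i ∅ T2 (by simp)
            (fun j hj => (Finset.mem_sdiff.mp hj).2) (by simp)
          simpa using this
        have step1 : μ (A i ∩ N T) ≤ μ (A i) * μ (N T2) := by
          rw [← hindep2]
          exact measure_mono (Set.inter_subset_inter_right _ (hNanti Finset.sdiff_subset))
        -- covering inequality
        have cover : N T2 ⊆ N T ∪ ⋃ j ∈ T ∩ B i, (A j ∩ N T2) := by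
          intro x hx
          by_cases hx1 : x ∈ N (T ∩ B i)
          · left
            simp only [hN, Set.mem_iInter, Set.mem_compl_iff] at hx hx1 ⊢
            intro j hj
            by_cases hjB : j ∈ B i
            · exact hx1 j (Finset.mem_inter.mpr ⟨hj, hjB⟩)
            · exact hx j (Finset.mem_sdiff.mpr ⟨hj, hjB⟩)
          · right
            simp only [hN, Set.mem_iInter, Set.mem_compl_iff, not_forall] at hx1
            obtain ⟨j, hj, hxj⟩ := hx1
            simp only [Set.mem_iUnion]
            exact ⟨j, hj, not_not.mp hxj, hx⟩
        have hμcover : μ (N T2) ≤ μ (N T) + μ (N T2) / 2 := by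
          calc μ (N T2) ≤ μ (N T ∪ ⋃ j ∈ T ∩ B i, (A j ∩ N T2)) := measure_mono cover
            _ ≤ μ (N T) + μ (⋃ j ∈ (T ∩ B i : Finset (Fin n)), (A j ∩ N T2)) :=
                measure_union_le _ _
            _ ≤ μ (N T) + ∑ j ∈ T ∩ B i, μ (A j ∩ N T2) := by
                gcongr
                exact measure_biUnion_finset_le _ _
            _ ≤ μ (N T) + ∑ j ∈ T ∩ B i, 2 * μ (A j) * μ (N T2) := by
                gcongr with j hj
                exact ih T2 hT2ss j
            _ ≤ μ (N T) + μ (N T2) / 2 := by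
                gcongr
                calc ∑ j ∈ T ∩ B i, 2 * μ (A j) * μ (N T2)
                    = 2 * (∑ j ∈ T ∩ B i, μ (A j)) * μ (N T2) := by
                      simp [Finset.mul_sum, Finset.sum_mul, mul_assoc]
                  _ ≤ 2 * (1/4) * μ (N T2) := by
                      gcongr
                      calc ∑ j ∈ T ∩ B i, μ (A j) ≤ ∑ j ∈ B i, μ (A j) :=
                            Finset.sum_le_sum_of_subset Finset.inter_subset_right
                        _ ≤ 1/4 := hsum i
                  _ = μ (N T2) / 2 := by rw [htwofour, hhalfmul]
        have hhalfN : μ (N T2) / 2 ≤ μ (N T) := by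
          have h1 : μ (N T2) - μ (N T2) / 2 ≤ μ (N T) := tsub_le_iff_right.mpr hμcover
          rwa [ENNReal.sub_half (hfin _)] at h1
        calc μ (A i ∩ N T) ≤ μ (A i) * μ (N T2) := step1
          _ = 2 * μ (A i) * (μ (N T2) / 2) := by
              rw [show (2:ℝ≥0∞) * μ (A i) * (μ (N T2) / 2)
                  = μ (A i) * (2 * (μ (N T2) / 2)) by ring,
                ENNReal.mul_div_cancel two_ne_zero ENNReal.ofNat_ne_top]
          _ ≤ 2 * μ (A i) * μ (N T) := by gcongr
      · -- easy case: T ∩ B i = ∅, full independence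
        have hout : ∀ j ∈ T, j ∉ B i := by
          intro j hj hjB
          exact hT1 ⟨j, Finset.mem_inter.mpr ⟨hj, hjB⟩⟩
        have h := hindep i ∅ T (by simp) hout (by simp)
        simp only [Finset.notMem_empty, Set.iInter_of_empty, Set.iInter_false,
          Set.univ_inter] at h
        calc μ (A i ∩ N T) = μ (A i) * μ (N T) := by simpa using h
          _ ≤ 2 * μ (A i) * μ (N T) := by
              rw [mul_assoc]
              exact le_mul_of_one_le_left zero_le one_le_two
  -- positivity by induction
  have pos : ∀ T : Finset (Fin n), 0 < μ (N T) := by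
    intro T
    induction T using Finset.induction_on with
    | empty => simp [hN]
    | @insert i T hiT ihT =>
      by_contra hzero
      push_neg at hzero
      have hzero' : μ ((A i)ᶜ ∩ N T) = 0 := by
        have hins : N (insert i T) = (A i)ᶜ ∩ N T := by
          simp [hN]
        rw [hins] at hzero
        exact le_antisymm hzero zero_le
      have hcov : μ (N T) ≤ μ (A i ∩ N T) + μ ((A i)ᶜ ∩ N T) := by
        refine (measure_mono ?_).trans (measure_union_le _ _)
        intro x hx
        by_cases h : x ∈ A i
        · exact Or.inl ⟨h, hx⟩
        · exact Or.inr ⟨h, hx⟩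
      have hlt : μ (N T) < μ (N T) := by
        calc μ (N T) ≤ μ (A i ∩ N T) + μ ((A i)ᶜ ∩ N T) := hcov
          _ = μ (A i ∩ N T) := by rw [hzero', add_zero]
          _ ≤ 2 * μ (A i) * μ (N T) := key T i
          _ < 1 * μ (N T) := by
              refine (ENNReal.mul_lt_mul_iff_left ihT.ne' (hfin _)).mpr ?_
              calc 2 * μ (A i) < 2 * (1/2) := by
                    refine (ENNReal.mul_lt_mul_iff_right (by norm_num) (by norm_num)).mpr (hhalf i)
                _ = 1 := by
                    rw [one_div, ENNReal.mul_inv_cancel two_ne_zero ENNReal.ofNat_ne_top]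
          _ = μ (N T) := one_mul _
      exact lt_irrefl _ hlt
  have hfinal : (⋂ i, (A i)ᶜ) = N Finset.univ := by
    simp [hN]
  rw [hfinal]
  exact pos Finset.univ
end

section
/- Fix c0 > 0, ℓ ≥ 2 and s > t ≥ 2. There exist an integer ℓ′ and ε0 > 0, depending only on s, t and ℓ, such that for all ε′ ∈ (0, ε0) and ε ∈ (0, ε0) there exists m0 with the following property for all m ≥ m0 and c ≥ c0. Let G be a t-graph on m vertices and let K be a collection of s-element vertex subsets, each inducing a clique in G, such that every edge of G is contained in (1 ± m^(−ε))·c·m^(s−t) elements of K. Let H be the (s choose t)-graph on vertex set E(G) whose edges are the sets {T ⊆ S : |T| = t} for S ∈ K (each edge identified with the corresponding s-set S). Then the conflict hypergraph C for H whose conflicts are all minimal bad j-configurations with 3 ≤ j ≤ ℓ is (d, ℓ′, ε′)-bounded, where d = (1 + m^(−ε))·c·m^(s−t). -/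
open Finset
open scoped Classical

noncomputable section

namespace CFM

universe u

variable {α : Type u} [DecidableEq α]

/-- The number of edges of the hypergraph `G` containing the vertex set `U`. -/
def degOf (G : Finset (Finset α)) (U : Finset α) : ℕ :=
  (G.filter fun e => U ⊆ e).card

/-- The degree of a single vertex. -/
def degv (G : Finset (Finset α)) (v : α) : ℕ := degOf G {v}

/-- The codegree of a pair of vertices. -/
def deg2 (G : Finset (Finset α)) (u v : α) : ℕ := degOf G {u, v}

/-- The minimum vertex degree over the vertex subset `P`. -/
def minDegOn (G : Finset (Finset α)) (P : Finset α) : ℕ :=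
  sInf ((fun v => degv G v) '' (P : Set α))

/-- A matching: a set of pairwise disjoint edges. -/
def IsMatching (M : Finset (Finset α)) : Prop :=
  ∀ e ∈ M, ∀ f ∈ M, e ≠ f → Disjoint e f

/-- The conflicts of size `j`. -/
def sized (C : Finset (Finset α)) (j : ℕ) : Finset (Finset α) :=
  C.filter fun c => c.card = j

/-- `E` contains no conflict from `C`. -/
def CFree (E : Finset α) (C : Finset (Finset α)) : Prop :=
  ∀ c ∈ C, ¬ c ⊆ E

/-- `C` is a `(d, ℓ, ε)`-bounded conflict hypergraph. -/
def Bounded (C : Finset (Finset α)) (d : ℝ) (ℓ : ℕ) (ε : ℝ) : Prop :=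
  (∀ c ∈ C, 3 ≤ c.card ∧ c.card ≤ ℓ) ∧
  (∀ j : ℕ, 3 ≤ j → j ≤ ℓ → ∀ e : α,
    (degOf (sized C j) {e} : ℝ) ≤ (ℓ : ℝ) * d ^ ((j : ℝ) - 1)) ∧
  (∀ j j' : ℕ, 3 ≤ j → j ≤ ℓ → 2 ≤ j' → j' + 1 ≤ j → ∀ F : Finset α, F.card = j' →
    (degOf (sized C j) F : ℝ) ≤ d ^ ((j : ℝ) - (j' : ℝ) - ε))

/-- The link of `e` in the conflict hypergraph `C`: the semiconflicts completed by `e`. -/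
def link (C : Finset (Finset α)) (e : α) : Finset (Finset α) :=
  (C.filter fun c => e ∈ c).image fun c => c.erase e

/-- `e, f` form an `(ε, C)`-conflict-sharing pair. -/
def ConflictSharing (C : Finset (Finset α)) (d : ℝ) (ℓ : ℕ) (ε : ℝ) (e f : α) : Prop :=
  ∃ j' : ℕ, 1 ≤ j' ∧ j' + 1 ≤ ℓ ∧
    d ^ ((j' : ℝ) - ε) < ((sized (link C e) j' ∩ sized (link C f) j').card : ℝ)


variable {V : Type u} [DecidableEq V]

/-- An `s`-set `S` induces a clique in the `t`-graph `G`. -/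
def InducesClique (G : Finset (Finset V)) (t : ℕ) (S : Finset V) : Prop :=
  ∀ T ⊆ S, T.card = t → T ∈ G

/-- A bad configuration: a family `J` of `s`-sets with pairwise intersections of size
at most `t - 1` spanning at most `(s - t)|J| + t` points. -/
def BadConfig (s t : ℕ) (J : Finset (Finset V)) : Prop :=
  (∀ S ∈ J, ∀ S' ∈ J, S ≠ S' → (S ∩ S').card ≤ t - 1) ∧
  (J.sup id).card ≤ (s - t) * J.card + t

/-- A minimal bad configuration: a bad configuration containing no smaller bad
`j'`-configuration with `2 ≤ j' < |J|`. -/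
def MinimalBad (s t : ℕ) (J : Finset (Finset V)) : Prop :=
  BadConfig s t J ∧ ∀ J' ⊆ J, 2 ≤ J'.card → J'.card < J.card → ¬ BadConfig s t J'

/-- The conflict hypergraph for the `(s choose t)`-graph `H` on vertex set `E(G)`
whose edges are `{T ⊆ S : |T| = t}` for `S ∈ K`: the conflicts are the minimal bad
`j`-configurations with `3 ≤ j ≤ ℓ` (each `s`-set identified with its edge of `H`). -/
def confSystem (K : Finset (Finset V)) (s t ℓ : ℕ) :
    Finset (Finset (Finset (Finset V))) :=
  (K.powerset.filter fun J => 3 ≤ J.card ∧ J.card ≤ ℓ ∧ MinimalBad s t J).image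
    fun J => J.image fun S => S.powersetCard t



lemma sup_powersetCard {W : Type u} [DecidableEq W] {t : ℕ} (ht : 1 ≤ t)
    (S : Finset W) (hS : t ≤ S.card) : (S.powersetCard t).sup id = S := by
  apply le_antisymm
  · exact Finset.sup_le fun T hT => (Finset.mem_powersetCard.mp hT).1
  · intro x hx
    have h1 : t - 1 ≤ (S.erase x).card := by
      rw [Finset.card_erase_of_mem hx]; omega
    obtain ⟨T', hT'sub, hT'card⟩ := Finset.exists_subset_card_eq h1
    have hxT' : x ∉ T' := fun h => (Finset.mem_erase.mp (hT'sub h)).1 rfl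
    have hmem : insert x T' ∈ S.powersetCard t := by
      rw [Finset.mem_powersetCard]
      refine ⟨?_, ?_⟩
      · intro y hy
        rcases Finset.mem_insert.mp hy with rfl | hy
        · exact hx
        · exact (Finset.mem_erase.mp (hT'sub hy)).2
      · rw [Finset.card_insert_of_notMem hxT', hT'card]; omega
    exact Finset.mem_sup.mpr ⟨insert x T', hmem, Finset.mem_insert_self x T'⟩

lemma image_sup_image_pow {W : Type u} [DecidableEq W] {t s : ℕ} (ht : 1 ≤ t) (hts : t ≤ s)
    {J : Finset (Finset W)} (hJ : ∀ S ∈ J, S.card = s) :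
    (J.image fun S => S.powersetCard t).image (fun f => f.sup id) = J := by
  rw [Finset.image_image]
  calc (J.image fun S => ((S.powersetCard t).sup id))
      = J.image id := Finset.image_congr (fun S hS =>
        sup_powersetCard ht S (by rw [hJ S hS]; exact hts))
    _ = J := Finset.image_id

lemma card_image_pow {W : Type u} [DecidableEq W] {t s : ℕ} (ht : 1 ≤ t) (hts : t ≤ s)
    {J : Finset (Finset W)} (hJ : ∀ S ∈ J, S.card = s) :
    (J.image fun S => S.powersetCard t).card = J.card := by
  apply Finset.card_image_of_injOn
  intro S1 h1 S2 h2 h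
  have e1 := sup_powersetCard ht S1 (by rw [hJ S1 h1]; exact hts)
  have e2 := sup_powersetCard ht S2 (by rw [hJ S2 h2]; exact hts)
  simp only at h
  rw [← e1, ← e2, h]

lemma image_sup_card {W : Type u} [DecidableEq W] {t s : ℕ} (ht : 1 ≤ t) (hts : t ≤ s)
    {F : Finset (Finset (Finset W))}
    (hF : ∀ f ∈ F, ∃ S : Finset W, S.card = s ∧ f = S.powersetCard t) :
    (F.image fun f => f.sup id).card = F.card := by
  apply Finset.card_image_of_injOn
  intro f1 h1 f2 h2 he
  obtain ⟨S1, hS1, rfl⟩ := hF f1 h1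
  obtain ⟨S2, hS2, rfl⟩ := hF f2 h2
  simp only at he
  rw [sup_powersetCard ht S1 (by omega), sup_powersetCard ht S2 (by omega)] at he
  rw [he]

lemma count_bound {W : Type u} [Fintype W] [DecidableEq W] (hm : 1 ≤ Fintype.card W)
    (s j n : ℕ) (J0 : Finset (Finset W)) :
    ((Finset.univ : Finset (Finset (Finset W))).filter
      (fun J => J0 ⊆ J ∧ J.card = j ∧ (∀ S ∈ J, S.card = s) ∧ (J.sup id).card ≤ n)).card
    ≤ ((n + 1) * Fintype.card W ^ (n - (J0.sup id).card)) * 2 ^ (n.choose s) := by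
  set A := J0.sup id with hA
  set r := n - A.card with hr
  set T := ((Finset.univ : Finset (Finset (Finset W))).filter
      (fun J => J0 ⊆ J ∧ J.card = j ∧ (∀ S ∈ J, S.card = s) ∧ (J.sup id).card ≤ n)) with hT
  have hAsub : ∀ J ∈ T, A ⊆ J.sup id ∧ (J.sup id).card ≤ n := by
    intro J hJ
    have hJ' := (Finset.mem_filter.mp hJ).2
    exact ⟨Finset.sup_mono hJ'.1, hJ'.2.2.2⟩
  by_cases hAn : A.card ≤ n
  · set 𝔅 := (Finset.univ : Finset (Finset W)).filter (fun B => B.card ≤ r) with h𝔅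
    have hsub : T ⊆ 𝔅.biUnion (fun B => T.filter (fun J => J.sup id \ A = B)) := by
      intro J hJ
      refine Finset.mem_biUnion.mpr ⟨J.sup id \ A, ?_, Finset.mem_filter.mpr ⟨hJ, rfl⟩⟩
      obtain ⟨hA1, hA2⟩ := hAsub J hJ
      refine Finset.mem_filter.mpr ⟨Finset.mem_univ _, ?_⟩
      rw [Finset.card_sdiff_of_subset hA1]
      omega
    have hterm : ∀ B ∈ 𝔅, (T.filter (fun J => J.sup id \ A = B)).card ≤ 2 ^ (n.choose s) := by
      intro B hB
      have hBr : B.card ≤ r := (Finset.mem_filter.mp hB).2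
      have hsub2 : T.filter (fun J => J.sup id \ A = B) ⊆ ((A ∪ B).powersetCard s).powerset := by
        intro J hJ
        obtain ⟨hJT, hJB⟩ := Finset.mem_filter.mp hJ
        obtain ⟨-, hJ0, hcard, hs, hsup⟩ := Finset.mem_filter.mp hJT
        rw [Finset.mem_powerset]
        intro S hS
        rw [Finset.mem_powersetCard]
        refine ⟨fun x hx => ?_, hs S hS⟩
        have hxsup : x ∈ J.sup id := Finset.mem_sup.mpr ⟨S, hS, hx⟩
        by_cases hxA : x ∈ A
        · exact Finset.mem_union_left _ hxA
        · exact Finset.mem_union_right _ (hJB ▸ Finset.mem_sdiff.mpr ⟨hxsup, hxA⟩)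
      have hUcard : (A ∪ B).card ≤ n := by
        calc (A ∪ B).card ≤ A.card + B.card := Finset.card_union_le _ _
          _ ≤ n := by omega
      calc (T.filter (fun J => J.sup id \ A = B)).card
          ≤ ((A ∪ B).powersetCard s).powerset.card := Finset.card_le_card hsub2
        _ = 2 ^ ((A ∪ B).powersetCard s).card := Finset.card_powerset _
        _ = 2 ^ ((A ∪ B).card.choose s) := by rw [Finset.card_powersetCard]
        _ ≤ 2 ^ (n.choose s) := Nat.pow_le_pow_right (by norm_num)
            (Nat.choose_le_choose s hUcard)
    have h𝔅card : 𝔅.card ≤ (r + 1) * Fintype.card W ^ r := by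
      have hsub3 : 𝔅 ⊆ (Finset.range (r + 1)).biUnion
          (fun i => Finset.univ.powersetCard i) := by
        intro B hB
        have hBr : B.card ≤ r := (Finset.mem_filter.mp hB).2
        exact Finset.mem_biUnion.mpr ⟨B.card, Finset.mem_range.mpr (by omega),
          Finset.mem_powersetCard.mpr ⟨Finset.subset_univ _, rfl⟩⟩
      calc 𝔅.card ≤ _ := Finset.card_le_card hsub3
        _ ≤ ∑ i ∈ Finset.range (r + 1), (Finset.univ.powersetCard i :
            Finset (Finset W)).card := Finset.card_biUnion_le
        _ ≤ ∑ i ∈ Finset.range (r + 1), Fintype.card W ^ r := by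
            apply Finset.sum_le_sum
            intro i hi
            rw [Finset.card_powersetCard, Finset.card_univ]
            calc (Fintype.card W).choose i ≤ Fintype.card W ^ i := Nat.choose_le_pow _ _
              _ ≤ Fintype.card W ^ r := Nat.pow_le_pow_right hm
                  (Nat.lt_succ_iff.mp (Finset.mem_range.mp hi))
        _ = (r + 1) * Fintype.card W ^ r := by
            rw [Finset.sum_const, Finset.card_range, smul_eq_mul]
    calc T.card ≤ (𝔅.biUnion (fun B => T.filter (fun J => J.sup id \ A = B))).card :=
          Finset.card_le_card hsub
      _ ≤ ∑ B ∈ 𝔅, (T.filter (fun J => J.sup id \ A = B)).card := Finset.card_biUnion_le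
      _ ≤ ∑ B ∈ 𝔅, 2 ^ (n.choose s) := Finset.sum_le_sum hterm
      _ = 𝔅.card * 2 ^ (n.choose s) := by rw [Finset.sum_const, smul_eq_mul]
      _ ≤ ((r + 1) * Fintype.card W ^ r) * 2 ^ (n.choose s) :=
          Nat.mul_le_mul_right _ h𝔅card
      _ ≤ ((n + 1) * Fintype.card W ^ r) * 2 ^ (n.choose s) := by
          have : r ≤ n := Nat.sub_le _ _
          exact Nat.mul_le_mul_right _ (Nat.mul_le_mul_right _ (by omega))
  · have : T = ∅ := by
      rw [Finset.eq_empty_iff_forall_notMem]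
      intro J hJ
      obtain ⟨hA1, hA2⟩ := hAsub J hJ
      have := Finset.card_le_card hA1
      omega
    rw [this]
    simp




lemma conf_mem {W : Type u} [DecidableEq W] {K : Finset (Finset W)} {s t ℓ : ℕ}
    {c : Finset (Finset (Finset W))} (hc : c ∈ confSystem K s t ℓ) :
    ∃ J : Finset (Finset W), J ⊆ K ∧ 3 ≤ J.card ∧ J.card ≤ ℓ ∧ MinimalBad s t J ∧
      c = J.image (fun S => S.powersetCard t) := by
  simp only [confSystem, Finset.mem_image, Finset.mem_filter, Finset.mem_powerset] at hc
  obtain ⟨J, ⟨hJK, h3, hℓ, hmb⟩, rfl⟩ := hc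
  exact ⟨J, hJK, h3, hℓ, hmb, rfl⟩

lemma deg_le_count {W : Type u} [Fintype W] [DecidableEq W] {K : Finset (Finset W)}
    {s t : ℕ} (ht : 1 ≤ t) (hts : t ≤ s) (hK : ∀ S ∈ K, S.card = s) (ℓ j : ℕ)
    (F : Finset (Finset (Finset W))) :
    degOf (sized (confSystem K s t ℓ) j) F ≤
      ((Finset.univ : Finset (Finset (Finset W))).filter
        (fun J => (F.image fun f => f.sup id) ⊆ J ∧ J.card = j ∧ (∀ S ∈ J, S.card = s) ∧
          (J.sup id).card ≤ (s - t) * j + t)).card := by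
  apply Finset.card_le_card_of_injOn (fun c => c.image fun f => f.sup id)
  · intro cc hcc
    obtain ⟨hc1, hcF⟩ := Finset.mem_filter.mp hcc
    obtain ⟨hcC, hcj⟩ := Finset.mem_filter.mp hc1
    obtain ⟨J, hJK, h3, hℓJ, hmb, rfl⟩ := conf_mem hcC
    have hJs : ∀ S ∈ J, S.card = s := fun S hS => hK S (hJK hS)
    have hrec := image_sup_image_pow ht hts hJs
    have hjcard : J.card = j := by rw [← card_image_pow ht hts hJs]; exact hcj
    show ((J.image fun S => S.powersetCard t).image fun f => f.sup id) ∈ _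
    rw [hrec]
    refine Finset.mem_filter.mpr ⟨Finset.mem_univ _, ?_, hjcard, hJs, ?_⟩
    · exact hrec ▸ Finset.image_subset_image hcF
    · have hb := hmb.1.2
      rw [hjcard] at hb
      exact hb
  · intro c1 h1 c2 h2 he
    simp only [Finset.coe_filter, Set.mem_setOf_eq] at h1 h2
    obtain ⟨hc1', -⟩ := h1
    obtain ⟨hcC1, -⟩ := Finset.mem_filter.mp hc1'
    obtain ⟨J1, hJK1, -, -, -, rfl⟩ := conf_mem hcC1
    obtain ⟨hc2', -⟩ := h2
    obtain ⟨hcC2, -⟩ := Finset.mem_filter.mp hc2'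
    obtain ⟨J2, hJK2, -, -, -, rfl⟩ := conf_mem hcC2
    simp only at he
    rw [image_sup_image_pow ht hts (fun S hS => hK S (hJK1 hS)),
        image_sup_image_pow ht hts (fun S hS => hK S (hJK2 hS))] at he
    rw [he]

set_option maxHeartbeats 1000000

/-- §A.3.2: the conflict hypergraph of minimal bad configurations is
`(d, ℓ', ε')`-bounded with `d = (1 + m^{-ε}) c m^{s-t}`. -/
theorem statement15 :
    ∀ c0 : ℝ, 0 < c0 → ∀ ℓ s t : ℕ, 2 ≤ ℓ → 2 ≤ t → t < s →
    ∃ ℓ' : ℕ, ∃ ε0 : ℝ, 0 < ε0 ∧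
      ∀ ε' ε : ℝ, 0 < ε' → ε' < ε0 → 0 < ε → ε < ε0 →
        ∃ m0 : ℕ, ∀ m : ℕ, m0 ≤ m → ∀ c : ℝ, c0 ≤ c →
          ∀ (W : Type u) [Fintype W] [DecidableEq W],
          ∀ (G K : Finset (Finset W)),
            Fintype.card W = m →
            -- G is a t-graph on m vertices
            (∀ e ∈ G, e.card = t) →
            -- K is a collection of s-sets inducing cliques in G
            (∀ S ∈ K, S.card = s ∧ InducesClique G t S) →
            -- every edge of G lies in (1 ± m^{-ε}) c m^{s-t} elements of K
            (∀ e ∈ G,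
              (1 - (m : ℝ) ^ (-ε)) * c * (m : ℝ) ^ (s - t) ≤
                  ((K.filter fun S => e ⊆ S).card : ℝ) ∧
              ((K.filter fun S => e ⊆ S).card : ℝ) ≤
                  (1 + (m : ℝ) ^ (-ε)) * c * (m : ℝ) ^ (s - t)) →
            Bounded (confSystem K s t ℓ)
              ((1 + (m : ℝ) ^ (-ε)) * c * (m : ℝ) ^ (s - t)) ℓ' ε' := by
  intro c0 hc0 ℓ s t hℓ2 ht2 htlt
  have ht1 : 1 ≤ t := by omega
  have hts1 : t ≤ s := by omega
  have hq1 : 1 ≤ s - t := by omega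
  set Nmax : ℕ := (s - t) * ℓ + t with hNmaxdef
  set K0 : ℕ := (Nmax + 1) * 2 ^ (Nmax.choose s) with hK0def
  set a : ℝ := min c0 1 with hadef
  have ha0 : 0 < a := lt_min hc0 one_pos
  have ha1 : a ≤ 1 := min_le_right _ _
  have hapow : (0:ℝ) < a ^ ℓ := pow_pos ha0 ℓ
  set ℓ' : ℕ := ℓ + ⌈(K0 : ℝ) / a ^ ℓ⌉₊ with hℓ'def
  have hℓℓ' : ℓ ≤ ℓ' := Nat.le_add_right _ _
  have hK0ℓ' : (K0 : ℝ) ≤ (ℓ' : ℝ) * a ^ ℓ := by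
    have h1 := Nat.le_ceil ((K0 : ℝ) / a ^ ℓ)
    rw [div_le_iff₀ hapow] at h1
    refine h1.trans ?_
    have h2 : ((⌈(K0 : ℝ) / a ^ ℓ⌉₊ : ℕ) : ℝ) ≤ (ℓ' : ℝ) := by
      exact_mod_cast Nat.le_add_left _ ℓ
    exact mul_le_mul_of_nonneg_right h2 hapow.le
  have hstpos : (0:ℝ) < (s:ℝ) - (t:ℝ) := by
    have h2 : (t:ℝ) + 1 ≤ (s:ℝ) := by exact_mod_cast htlt
    linarith
  refine ⟨ℓ', 1 / (2 * (s - t : ℝ)), div_pos one_pos (by linarith), ?_⟩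
  intro ε' ε hε'0 hε'ub hε0 hεub
  have hqR : (1:ℝ) ≤ ((s - t : ℕ) : ℝ) := by exact_mod_cast hq1
  have hstR : ((s:ℝ) - (t:ℝ)) = ((s - t : ℕ) : ℝ) := by
    rw [Nat.cast_sub hts1]
  have hε'half : ε' < 1/2 := by
    refine lt_of_lt_of_le hε'ub ?_
    rw [hstR, div_le_div_iff₀ (by linarith) (by norm_num)]
    linarith
  have hqε' : ((s - t : ℕ) : ℝ) * ε' ≤ 1/2 := by
    have h := hε'ub
    rw [hstR, lt_div_iff₀ (by linarith)] at h
    nlinarith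
  refine ⟨max 1 ⌈((K0 : ℝ) / a ^ ℓ) ^ 2⌉₊, ?_⟩
  intro m hm0 c hcc0 W _ _ G K hWm hG hKst hdeg
  have hm1 : 1 ≤ m := le_trans (le_max_left _ _) hm0
  have hmR1 : (1:ℝ) ≤ (m:ℝ) := by exact_mod_cast hm1
  have hmR0 : (0:ℝ) < (m:ℝ) := by linarith
  have hsqrt : (K0 : ℝ) / a ^ ℓ ≤ Real.sqrt m := by
    rw [Real.le_sqrt (by positivity) hmR0.le]
    have h1 : (⌈((K0 : ℝ) / a ^ ℓ) ^ 2⌉₊ : ℕ) ≤ m := le_trans (le_max_right _ _) hm0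
    calc ((K0 : ℝ) / a ^ ℓ) ^ 2 ≤ (⌈((K0 : ℝ) / a ^ ℓ) ^ 2⌉₊ : ℝ) := Nat.le_ceil _
      _ ≤ (m : ℝ) := by exact_mod_cast h1
  set d : ℝ := (1 + (m : ℝ) ^ (-ε)) * c * (m : ℝ) ^ (s - t) with hddef
  have hc0c : 0 < c := lt_of_lt_of_le hc0 hcc0
  have hmq0 : (0:ℝ) < (m:ℝ) ^ (s - t) := pow_pos hmR0 _
  have hεnn : (0:ℝ) ≤ (m:ℝ) ^ (-ε) := Real.rpow_nonneg hmR0.le _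
  have had : a * (m:ℝ) ^ (s - t) ≤ d := by
    rw [hddef]
    have hac : a ≤ c := le_trans (min_le_left _ _) hcc0
    have h1 : a * (m:ℝ) ^ (s - t) ≤ c * (m:ℝ) ^ (s - t) :=
      mul_le_mul_of_nonneg_right hac hmq0.le
    have h2 : c * (m:ℝ) ^ (s - t) ≤ (1 + (m:ℝ) ^ (-ε)) * c * (m:ℝ) ^ (s - t) := by
      have : c * (m:ℝ) ^ (s - t) ≥ 0 := by positivity
      nlinarith
    linarith
  have hd0 : 0 < d := lt_of_lt_of_le (by positivity) had
  have hKs : ∀ S ∈ K, S.card = s := fun S hS => (hKst S hS).1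
  have hmW : 1 ≤ Fintype.card W := by omega
  refine ⟨?_, ?_, ?_⟩
  -- (C1)
  · intro cc hcc
    obtain ⟨J, hJK, h3J, hℓJ, hmb, rfl⟩ := conf_mem hcc
    have hcard := card_image_pow ht1 hts1 (fun S hS => hKs S (hJK hS))
    rw [hcard]
    exact ⟨h3J, le_trans hℓJ hℓℓ'⟩
  -- (C2)
  · intro j h3j hjℓ' e
    by_cases hne : ((sized (confSystem K s t ℓ) j).filter fun f => ({e} : Finset _) ⊆ f).Nonempty
    · obtain ⟨cc, hcc⟩ := hne
      obtain ⟨hc1, hcF⟩ := Finset.mem_filter.mp hcc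
      obtain ⟨hcC, hcj⟩ := Finset.mem_filter.mp hc1
      obtain ⟨J, hJK, h3J, hℓJ, hmb, rfl⟩ := conf_mem hcC
      have hJs : ∀ S ∈ J, S.card = s := fun S hS => hKs S (hJK hS)
      have hjcard : J.card = j := by rw [← card_image_pow ht1 hts1 hJs]; exact hcj
      have hjℓ : j ≤ ℓ := by omega
      obtain ⟨S0, hS0J, he⟩ := Finset.mem_image.mp (hcF (Finset.mem_singleton_self e))
      have hS0s : S0.card = s := hJs S0 hS0J
      -- the anchor set of the singleton F = {e}
      have hu : ((({e} : Finset (Finset (Finset W))).image fun f : Finset (Finset W) => f.sup id).sup id).card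
          = s := by
        simp only [Finset.image_singleton, Finset.sup_singleton, id_eq, ← he]
        rw [sup_powersetCard ht1 S0 (by omega), hS0s]
      -- counting
      have hcount := deg_le_count ht1 hts1 hKs ℓ j ({e} : Finset (Finset (Finset W)))
      have hcb := count_bound hmW s j ((s - t) * j + t)
        (({e} : Finset (Finset (Finset W))).image fun f : Finset (Finset W) => f.sup id)
      rw [hu, hWm] at hcb
      have hexp : (s - t) * j + t - s = (s - t) * (j - 1) := by
        have hsplit : (s - t) * j = (s - t) * (j - 1) + (s - t) := by
          rw [← Nat.mul_succ]
          congr 1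
          omega
        omega
      rw [hexp] at hcb
      have hnat : degOf (sized (confSystem K s t ℓ) j) {e} ≤ K0 * m ^ ((s - t) * (j - 1)) := by
        refine le_trans hcount (le_trans hcb ?_)
        have hnN : (s - t) * j + t ≤ Nmax := by
          have : (s - t) * j ≤ (s - t) * ℓ := Nat.mul_le_mul_left _ hjℓ
          omega
        calc (((s - t) * j + t + 1) * m ^ ((s - t) * (j - 1))) * 2 ^ (((s - t) * j + t).choose s)
            ≤ ((Nmax + 1) * m ^ ((s - t) * (j - 1))) * 2 ^ (Nmax.choose s) := by
              refine Nat.mul_le_mul (Nat.mul_le_mul_right _ (by omega))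
                (Nat.pow_le_pow_right (by norm_num) (Nat.choose_le_choose s hnN))
          _ = K0 * m ^ ((s - t) * (j - 1)) := by rw [hK0def]; ring
      have hreal : ((degOf (sized (confSystem K s t ℓ) j) {e} : ℕ) : ℝ)
          ≤ (K0 : ℝ) * (m : ℝ) ^ ((s - t) * (j - 1)) := by exact_mod_cast hnat
      refine hreal.trans ?_
      have h2 : (K0 : ℝ) * (m : ℝ) ^ ((s - t) * (j - 1))
          ≤ ((ℓ' : ℝ) * a ^ (j - 1)) * (m : ℝ) ^ ((s - t) * (j - 1)) := by
        refine mul_le_mul_of_nonneg_right (hK0ℓ'.trans ?_) (by positivity)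
        refine mul_le_mul_of_nonneg_left ?_ (by positivity)
        exact pow_le_pow_of_le_one ha0.le ha1 (by omega)
      refine h2.trans ?_
      have h3 : ((ℓ' : ℝ) * a ^ (j - 1)) * (m : ℝ) ^ ((s - t) * (j - 1))
          = (ℓ' : ℝ) * (a * (m : ℝ) ^ (s - t)) ^ (j - 1) := by
        rw [mul_pow, pow_mul]
        ring
      rw [h3]
      have h4 : (a * (m : ℝ) ^ (s - t)) ^ (j - 1) ≤ d ^ (j - 1) :=
        pow_le_pow_left₀ (by positivity) had _
      have h5 : d ^ ((j : ℝ) - 1) = d ^ (j - 1 : ℕ) := by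
        rw [← Real.rpow_natCast d (j - 1), Nat.cast_sub (by omega), Nat.cast_one]
      rw [h5]
      exact mul_le_mul_of_nonneg_left h4 (by positivity)
    · have hz : degOf (sized (confSystem K s t ℓ) j) {e} = 0 := by
        rw [degOf, Finset.card_eq_zero, Finset.not_nonempty_iff_eq_empty.mp hne]
      rw [hz]
      simp only [Nat.cast_zero]
      exact mul_nonneg (Nat.cast_nonneg _) (Real.rpow_nonneg hd0.le _)
  -- (C3)
  · intro j j' h3j hjℓ' h2j' hj'1j F hFcard
    by_cases hne : ((sized (confSystem K s t ℓ) j).filter fun f => F ⊆ f).Nonempty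
    · obtain ⟨cc, hcc⟩ := hne
      obtain ⟨hc1, hcF⟩ := Finset.mem_filter.mp hcc
      obtain ⟨hcC, hcj⟩ := Finset.mem_filter.mp hc1
      obtain ⟨J, hJK, h3J, hℓJ, hmb, rfl⟩ := conf_mem hcC
      have hJs : ∀ S ∈ J, S.card = s := fun S hS => hKs S (hJK hS)
      have hjcard : J.card = j := by rw [← card_image_pow ht1 hts1 hJs]; exact hcj
      have hjℓ : j ≤ ℓ := by omega
      have hFmem : ∀ f ∈ F, ∃ S : Finset W, S.card = s ∧ f = S.powersetCard t := by
        intro f hf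
        obtain ⟨S, hSJ, rfl⟩ := Finset.mem_image.mp (hcF hf)
        exact ⟨S, hJs S hSJ, rfl⟩
      have hJ0card : (F.image fun f : Finset (Finset W) => f.sup id).card = j' := by
        rw [image_sup_card ht1 hts1 hFmem]; exact hFcard
      have hJ0J : (F.image fun f : Finset (Finset W) => f.sup id) ⊆ J := by
        intro S hS
        obtain ⟨f, hfF, rfl⟩ := Finset.mem_image.mp hS
        obtain ⟨f', hf'J, rfl⟩ := Finset.mem_image.mp (hcF hfF)
        show (f'.powersetCard t).sup id ∈ J
        rw [sup_powersetCard ht1 f' (by rw [hJs f' hf'J]; omega)]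
        exact hf'J
      have hbad : ¬ BadConfig s t (F.image fun f : Finset (Finset W) => f.sup id) := by
        refine hmb.2 _ hJ0J ?_ ?_ <;> omega
      have hpair : ∀ S ∈ (F.image fun f : Finset (Finset W) => f.sup id), ∀ S' ∈ (F.image fun f : Finset (Finset W) => f.sup id),
          S ≠ S' → (S ∩ S').card ≤ t - 1 :=
        fun S hS S' hS' hne' => hmb.1.1 S (hJ0J hS) S' (hJ0J hS') hne'
      have hu : (s - t) * j' + t + 1 ≤ (((F.image fun f : Finset (Finset W) => f.sup id)).sup id).card := by
        rcases Nat.lt_or_ge ((((F.image fun f : Finset (Finset W) => f.sup id)).sup id).card)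
          ((s - t) * j' + t + 1) with h | h
        · exact absurd ⟨hpair, by rw [hJ0card]; exact Nat.lt_succ_iff.mp h⟩ hbad
        · exact h
      -- counting
      have hcount := deg_le_count ht1 hts1 hKs ℓ j F
      have hcb := count_bound hmW s j ((s - t) * j + t) (F.image fun f : Finset (Finset W) => f.sup id)
      rw [hWm] at hcb
      -- exponent bookkeeping
      have hx1 : 1 ≤ (s - t) * (j - j') := Nat.mul_pos (by omega) (by omega)
      have hexp : (s - t) * j + t - (((F.image fun f : Finset (Finset W) => f.sup id)).sup id).card
          ≤ (s - t) * (j - j') - 1 := by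
        have hsplit : (s - t) * j = (s - t) * j' + (s - t) * (j - j') := by
          rw [← Nat.mul_add]
          congr 1
          omega
        omega
      have hnat : degOf (sized (confSystem K s t ℓ) j) F
          ≤ K0 * m ^ ((s - t) * (j - j') - 1) := by
        refine le_trans hcount (le_trans hcb ?_)
        have hnN : (s - t) * j + t ≤ Nmax := by
          have : (s - t) * j ≤ (s - t) * ℓ := Nat.mul_le_mul_left _ hjℓ
          omega
        calc (((s - t) * j + t + 1) *
              m ^ ((s - t) * j + t - (((F.image fun f : Finset (Finset W) => f.sup id)).sup id).card)) *
              2 ^ (((s - t) * j + t).choose s)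
            ≤ ((Nmax + 1) * m ^ ((s - t) * (j - j') - 1)) * 2 ^ (Nmax.choose s) := by
              refine Nat.mul_le_mul (Nat.mul_le_mul (by omega)
                (Nat.pow_le_pow_right hm1 hexp))
                (Nat.pow_le_pow_right (by norm_num) (Nat.choose_le_choose s hnN))
          _ = K0 * m ^ ((s - t) * (j - j') - 1) := by rw [hK0def]; ring
      have hreal : ((degOf (sized (confSystem K s t ℓ) j) F : ℕ) : ℝ)
          ≤ (K0 : ℝ) * (m : ℝ) ^ ((s - t) * (j - j') - 1 : ℕ) := by exact_mod_cast hnat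
      refine hreal.trans ?_
      -- now the real estimate
      set x : ℕ := (s - t) * (j - j') with hxdef
      set X : ℝ := (j : ℝ) - (j' : ℝ) - ε' with hXdef
      have hkR : ((j - j' : ℕ) : ℝ) = (j : ℝ) - (j' : ℝ) := by
        rw [Nat.cast_sub (by omega)]
      have hX0 : 0 < X := by
        rw [hXdef, ← hkR]
        have : (1 : ℝ) ≤ ((j - j' : ℕ) : ℝ) := by exact_mod_cast (by omega : 1 ≤ j - j')
        linarith
      have hXℓ : X ≤ (ℓ : ℝ) := by
        rw [hXdef, ← hkR]
        have : ((j - j' : ℕ) : ℝ) ≤ (ℓ : ℝ) := by exact_mod_cast (by omega : j - j' ≤ ℓ)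
        linarith
      have hxR : (x : ℝ) = ((s - t : ℕ) : ℝ) * ((j - j' : ℕ) : ℝ) := by
        rw [hxdef]; push_cast; ring
      -- d ^ X ≥ a^ℓ * m^(x - 1/2)
      have key : a ^ ℓ * (m : ℝ) ^ ((x : ℝ) - 1/2) ≤ d ^ X := by
        have s1 : (a * (m : ℝ) ^ (s - t)) ^ X ≤ d ^ X :=
          Real.rpow_le_rpow (by positivity) had hX0.le
        have s2 : (a * (m : ℝ) ^ (s - t)) ^ X
            = a ^ X * ((m : ℝ) ^ (s - t)) ^ X :=
          Real.mul_rpow ha0.le (by positivity)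
        have s3 : a ^ (ℓ : ℝ) ≤ a ^ X :=
          Real.rpow_le_rpow_of_exponent_ge ha0 ha1 hXℓ
        have s3' : a ^ (ℓ : ℝ) = a ^ (ℓ : ℕ) := Real.rpow_natCast a ℓ
        have s4 : ((m : ℝ) ^ (s - t)) ^ X = (m : ℝ) ^ (((s - t : ℕ) : ℝ) * X) := by
          rw [← Real.rpow_natCast (m : ℝ) (s - t), ← Real.rpow_mul hmR0.le]
        have s5 : (x : ℝ) - 1/2 ≤ ((s - t : ℕ) : ℝ) * X := by
          rw [hXdef, hxR]
          have expand : ((s - t : ℕ) : ℝ) * ((j : ℝ) - (j' : ℝ) - ε')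
              = ((s - t : ℕ) : ℝ) * ((j : ℝ) - (j' : ℝ)) - ((s - t : ℕ) : ℝ) * ε' := by ring
          rw [expand, hkR]
          linarith
        have s6 : (m : ℝ) ^ ((x : ℝ) - 1/2) ≤ (m : ℝ) ^ (((s - t : ℕ) : ℝ) * X) :=
          Real.rpow_le_rpow_of_exponent_le hmR1 s5
        calc a ^ ℓ * (m : ℝ) ^ ((x : ℝ) - 1/2)
            ≤ a ^ X * (m : ℝ) ^ (((s - t : ℕ) : ℝ) * X) := by
              refine mul_le_mul ?_ s6 (by positivity) (Real.rpow_nonneg ha0.le _)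
              rw [← s3']; exact s3
          _ = (a * (m : ℝ) ^ (s - t)) ^ X := by rw [s2, s4]
          _ ≤ d ^ X := s1
      -- m^(x-1/2) = m^(x-1) * m^(1/2)
      have split : (m : ℝ) ^ ((x : ℝ) - 1/2)
          = (m : ℝ) ^ (x - 1 : ℕ) * (m : ℝ) ^ ((1:ℝ)/2) := by
        rw [← Real.rpow_natCast (m : ℝ) (x - 1), ← Real.rpow_add hmR0]
        congr 1
        rw [Nat.cast_sub hx1]
        ring
      have hK0small : (K0 : ℝ) ≤ a ^ ℓ * (m : ℝ) ^ ((1:ℝ)/2) := by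
        have : (m : ℝ) ^ ((1:ℝ)/2) = Real.sqrt m := (Real.sqrt_eq_rpow _).symm
        rw [this]
        rw [div_le_iff₀ hapow] at hsqrt
        linarith [hsqrt]
      calc (K0 : ℝ) * (m : ℝ) ^ (x - 1 : ℕ)
          ≤ (a ^ ℓ * (m : ℝ) ^ ((1:ℝ)/2)) * (m : ℝ) ^ (x - 1 : ℕ) :=
            mul_le_mul_of_nonneg_right hK0small (by positivity)
        _ = a ^ ℓ * (m : ℝ) ^ ((x : ℝ) - 1/2) := by rw [split]; ring
        _ ≤ d ^ X := key
    · have hz : degOf (sized (confSystem K s t ℓ) j) F = 0 := by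
        rw [degOf, Finset.card_eq_zero, Finset.not_nonempty_iff_eq_empty.mp hne]
      rw [hz]
      simp only [Nat.cast_zero]
      exact Real.rpow_nonneg hd0.le _


end CFM
end
end
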